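/- For almost every x∈(0,1], liminf_{n→∞} d_n(x) = 1; consequently liminf_{n→∞} (d_n(x) − log_2 n)/log_2(log n) = −∞. -/

import Mathlib

open MeasureTheory Filter Set Real
open scoped ENNReal

/-- First digit of the power-2-decaying Gauss-like expansion:
`⌈y⌉` in the paper denotes the smallest integer strictly larger than `y`. -/
noncomputable def p2dD1 (x : ℝ) : ℕ := (⌊-Real.logb 2 x⌋ + 1).toNat

/-- The Gauss-like map `T x = 2^n x - 1` on `(1/2^n, 1/2^(n-1)]`. -/
noncomputable def p2dT (x : ℝ) : ℝ := 2 ^ p2dD1 x * x - 1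

/-- `n`-th digit (`n ≥ 1`) of the P2DGL expansion. -/
noncomputable def p2dDigit (n : ℕ) (x : ℝ) : ℕ := p2dD1 (p2dT^[n-1] x)

/-- Maximal digit among the first `n` digits. -/
noncomputable def p2dL (n : ℕ) (x : ℝ) : ℕ :=
  Finset.sup (Finset.Icc 1 n) (fun i => p2dDigit i x)

lemma logb_two_pow_inv (n : ℕ) : Real.logb 2 ((2:ℝ)^n)⁻¹ = -(n:ℝ) := by
  rw [Real.logb_inv, Real.logb_pow, Real.logb_self_eq_one (by norm_num)]
  ring

lemma p2dD1_eq (n : ℕ) {x : ℝ} (h1 : ((2:ℝ)^(n+1))⁻¹ < x) (h2 : x ≤ ((2:ℝ)^n)⁻¹) :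
    p2dD1 x = n + 1 := by
  have hx : 0 < x := lt_trans (by positivity) h1
  have hub : -Real.logb 2 x < (n:ℝ) + 1 := by
    have := Real.logb_lt_logb (b := 2) (by norm_num) (by positivity) h1
    rw [logb_two_pow_inv (n+1)] at this
    push_cast at this ⊢
    linarith
  have hlb : (n:ℝ) ≤ -Real.logb 2 x := by
    have := Real.logb_le_logb_of_le (b := 2) (by norm_num) hx h2
    rw [logb_two_pow_inv n] at this
    linarith
  have hfl : ⌊-Real.logb 2 x⌋ = (n:ℤ) := by
    rw [Int.floor_eq_iff]
    push_cast
    exact ⟨hlb, hub⟩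
  simp [p2dD1, hfl]

lemma mem_branch {x : ℝ} (hx : x ∈ Ioc (0:ℝ) 1) :
    ∃ n : ℕ, ((2:ℝ)^(n+1))⁻¹ < x ∧ x ≤ ((2:ℝ)^n)⁻¹ := by
  obtain ⟨hx0, hx1⟩ := hx
  have h0 : (0:ℤ) ≤ ⌊-Real.logb 2 x⌋ :=
    Int.floor_nonneg.mpr (by simpa using Real.logb_nonpos (by norm_num) hx0.le hx1)
  set k := ⌊-Real.logb 2 x⌋.toNat with hk
  have hkr : (k:ℝ) = (⌊-Real.logb 2 x⌋ : ℝ) := by exact_mod_cast congrArg Int.cast (Int.toNat_of_nonneg h0)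
  refine ⟨k, ?_, ?_⟩
  · have h1 : -Real.logb 2 x < (k : ℝ) + 1 := by
      have := Int.lt_floor_add_one (-Real.logb 2 x); rw [hkr]; linarith
    have : ((2:ℝ))^(-(((k:ℝ)) + 1)) < x :=
      (Real.lt_logb_iff_rpow_lt (by norm_num) hx0).mp (by linarith)
    calc ((2:ℝ)^(k+1))⁻¹ = (2:ℝ)^(-(((k:ℝ)) + 1)) := by
          rw [Real.rpow_neg (by norm_num)]
          norm_num [← Real.rpow_natCast 2 (k+1)]
      _ < x := this
  · have h2 : (k : ℝ) ≤ -Real.logb 2 x := by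
      have := Int.floor_le (-Real.logb 2 x); rw [hkr]; linarith
    have : x ≤ ((2:ℝ))^(-((k:ℝ))) :=
      (Real.logb_le_iff_le_rpow (by norm_num) hx0).mp (by linarith)
    calc x ≤ (2:ℝ)^(-((k:ℝ))) := this
      _ = ((2:ℝ)^k)⁻¹ := by rw [Real.rpow_neg (by norm_num), Real.rpow_natCast]

lemma p2dT_eq (n : ℕ) {x : ℝ} (h1 : ((2:ℝ)^(n+1))⁻¹ < x) (h2 : x ≤ ((2:ℝ)^n)⁻¹) :
    p2dT x = 2^(n+1) * x - 1 := by
  rw [p2dT, p2dD1_eq n h1 h2]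

lemma p2dT_mem {x : ℝ} (hx : x ∈ Ioc (0:ℝ) 1) : p2dT x ∈ Ioc (0:ℝ) 1 := by
  obtain ⟨n, h1, h2⟩ := mem_branch hx
  rw [p2dT_eq n h1 h2]
  have hp : (0:ℝ) < 2^(n+1) := by positivity
  constructor
  · have := (div_lt_iff₀ hp).mp (by rw [one_div]; exact h1)
    nlinarith [mul_pos hp hx.1]
  · have : (2:ℝ)^(n+1) * x ≤ 2^(n+1) * ((2:ℝ)^n)⁻¹ := by nlinarith
    have h2n : (2:ℝ)^(n+1) * ((2:ℝ)^n)⁻¹ = 2 := by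
      rw [pow_succ]; field_simp
    linarith

lemma p2dT_iter_mem {x : ℝ} (hx : x ∈ Ioc (0:ℝ) 1) (k : ℕ) : p2dT^[k] x ∈ Ioc (0:ℝ) 1 := by
  induction k with
  | zero => simpa using hx
  | succ m ih => rw [Function.iterate_succ_apply']; exact p2dT_mem ih

lemma measurable_p2dD1 : Measurable p2dD1 := by
  apply measurable_from_top.comp
  apply Measurable.add _ measurable_const
  apply Int.measurable_floor.comp
  apply Measurable.neg
  unfold Real.logb
  exact Real.measurable_log.div measurable_const

lemma measurable_p2dT : Measurable p2dT := by
  have h1 : Measurable fun x : ℝ => (2:ℝ)^(p2dD1 x) :=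
    measurable_from_top.comp measurable_p2dD1
  exact (h1.mul measurable_id).sub measurable_const

lemma branch_preimage (n : ℕ) (S : Set ℝ) :
    p2dT ⁻¹' S ∩ Ioc ((2:ℝ)^(n+1))⁻¹ ((2:ℝ)^n)⁻¹
      = (fun x : ℝ => 2^(n+1) * x - 1) ⁻¹' (S ∩ Ioc 0 1) := by
  have hp : (0:ℝ) < 2^(n+1) := by positivity
  ext x
  simp only [mem_inter_iff, mem_preimage, mem_Ioc]
  have key : (((2:ℝ)^(n+1))⁻¹ < x ∧ x ≤ ((2:ℝ)^n)⁻¹) ↔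
      (0 < 2^(n+1) * x - 1 ∧ 2^(n+1) * x - 1 ≤ 1) := by
    rw [inv_lt_iff_one_lt_mul₀ hp]
    constructor
    · rintro ⟨h1, h2⟩
      refine ⟨by linarith [mul_comm x ((2:ℝ)^(n+1))], ?_⟩
      have : (2:ℝ)^(n+1) * x ≤ 2^(n+1) * ((2:ℝ)^n)⁻¹ := by nlinarith
      have h2n : (2:ℝ)^(n+1) * ((2:ℝ)^n)⁻¹ = 2 := by rw [pow_succ]; field_simp
      linarith
    · rintro ⟨h1, h2⟩
      constructor
      · linarith [mul_comm ((2:ℝ)^(n+1)) x]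
      · rw [← mul_le_mul_iff_right₀ hp]
        have h2n : (2:ℝ)^(n+1) * ((2:ℝ)^n)⁻¹ = 2 := by rw [pow_succ]; field_simp
        linarith
  constructor
  · rintro ⟨hS, hI⟩
    have hT := p2dT_eq n hI.1 hI.2
    exact ⟨by rwa [hT] at hS, key.mp hI⟩
  · rintro ⟨hS, hI⟩
    have hI' := key.mpr hI
    exact ⟨by rwa [p2dT_eq n hI'.1 hI'.2], hI'⟩

lemma branch_volume (n : ℕ) (S : Set ℝ) :
    volume (p2dT ⁻¹' S ∩ Ioc ((2:ℝ)^(n+1))⁻¹ ((2:ℝ)^n)⁻¹)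
      = (2:ℝ≥0∞)⁻¹^(n+1) * volume (S ∩ Ioc 0 1) := by
  rw [branch_preimage]
  have : (fun x : ℝ => 2^(n+1) * x - 1) = (fun y : ℝ => y + (-1)) ∘ (fun x : ℝ => (2:ℝ)^(n+1) * x) := by
    ext x; simp; ring
  rw [this, preimage_comp]
  rw [Real.volume_preimage_mul_left (by positivity : ((2:ℝ)^(n+1)) ≠ 0)]
  rw [measure_preimage_add_right]
  congr 1
  rw [abs_of_pos (by positivity)]
  rw [← inv_pow, ENNReal.ofReal_pow (by norm_num)]
  norm_num [ENNReal.ofReal_inv_of_pos]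
  congr 1
  rw [ENNReal.ofReal_div_of_pos (by norm_num)]
  simp

lemma iUnion_branches : (⋃ n : ℕ, Ioc ((2:ℝ)^(n+1))⁻¹ ((2:ℝ)^n)⁻¹) = Ioc 0 1 := by
  ext x
  simp only [mem_iUnion, mem_Ioc]
  constructor
  · rintro ⟨n, h1, h2⟩
    refine ⟨lt_trans (by positivity) h1, le_trans h2 ?_⟩
    rw [inv_le_one₀ (by positivity)]
    exact one_le_pow₀ (by norm_num)
  · intro h; exact mem_branch h

lemma disjoint_branches : Pairwise (Function.onFun Disjoint
    (fun n : ℕ => Ioc ((2:ℝ)^(n+1))⁻¹ ((2:ℝ)^n)⁻¹)) := by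
  have key : ∀ m n : ℕ, m < n → Disjoint (Ioc ((2:ℝ)^(m+1))⁻¹ ((2:ℝ)^m)⁻¹)
      (Ioc ((2:ℝ)^(n+1))⁻¹ ((2:ℝ)^n)⁻¹) := by
    intro m n hmn
    rw [Set.Ioc_disjoint_Ioc]
    have : ((2:ℝ)^n)⁻¹ ≤ ((2:ℝ)^(m+1))⁻¹ := by
      apply inv_anti₀ (by positivity)
      exact pow_le_pow_right₀ (by norm_num) hmn
    exact le_trans (min_le_right _ _) (le_trans this (le_max_left _ _))
  intro m n hmn
  rcases lt_or_gt_of_ne hmn with h | h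
  · exact key m n h
  · exact (key n m h).symm

lemma tsum_half_pow : (∑' n : ℕ, (2:ℝ≥0∞)⁻¹^(n+1)) = 1 := by
  have : ∀ n : ℕ, (2:ℝ≥0∞)⁻¹^(n+1) = (2:ℝ≥0∞)⁻¹^n * 2⁻¹ := fun n => pow_succ _ _
  simp_rw [this]
  rw [ENNReal.tsum_mul_right, ENNReal.tsum_geometric]
  rw [show (1:ℝ≥0∞) - 2⁻¹ = 2⁻¹ from ENNReal.one_sub_inv_two, inv_inv]
  rw [ENNReal.mul_inv_cancel (by norm_num) (by norm_num)]

lemma p2dT_pres (S : Set ℝ) (hS : MeasurableSet S) :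
    (volume.restrict (Ioc (0:ℝ) 1)) (p2dT ⁻¹' S) = (volume.restrict (Ioc (0:ℝ) 1)) S := by
  rw [Measure.restrict_apply (measurable_p2dT hS), Measure.restrict_apply hS]
  rw [← iUnion_branches, inter_iUnion]
  rw [measure_iUnion (fun m n hmn => ((disjoint_branches hmn).mono inter_subset_right inter_subset_right))
    (fun n => (measurable_p2dT hS).inter measurableSet_Ioc)]
  simp_rw [branch_volume]
  rw [ENNReal.tsum_mul_right, tsum_half_pow, one_mul]
  congr 1
  exact iUnion_branches ▸ rfl

local notation "μ" => volume.restrict (Ioc (0:ℝ) 1)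

lemma p2dT_iter_pres (k : ℕ) (S : Set ℝ) (hS : MeasurableSet S) :
    μ ((p2dT^[k]) ⁻¹' S) = μ S := by
  induction k with
  | zero => simp
  | succ m ih =>
    have : (p2dT^[m+1]) ⁻¹' S = p2dT ⁻¹' ((p2dT^[m]) ⁻¹' S) := by
      ext x; simp [Function.iterate_succ_apply]
    rw [this, p2dT_pres _ (measurable_p2dT.iterate m hS), ih]

lemma half_inter (W : Set ℝ) (hW : MeasurableSet W) :
    μ (Ioc (0:ℝ) 2⁻¹ ∩ p2dT ⁻¹' W) = 2⁻¹ * μ W := by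
  have hA : μ (Ioc ((2:ℝ))⁻¹ 1 ∩ p2dT ⁻¹' W) = 2⁻¹ * μ W := by
    rw [Measure.restrict_apply (measurableSet_Ioc.inter (measurable_p2dT hW))]
    have hb := branch_volume 0 W
    rw [show ((2:ℝ)^(0+1))⁻¹ = (2:ℝ)⁻¹ by norm_num, show ((2:ℝ)^0)⁻¹ = (1:ℝ) by norm_num, pow_one] at hb
    have h0 : Ioc ((2:ℝ))⁻¹ 1 ∩ p2dT ⁻¹' W ∩ Ioc 0 1 = p2dT ⁻¹' W ∩ Ioc (2:ℝ)⁻¹ 1 := by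
      have hss : Ioc ((2:ℝ))⁻¹ 1 ⊆ Ioc 0 1 := Ioc_subset_Ioc (by norm_num) le_rfl
      rw [inter_comm (Ioc ((2:ℝ))⁻¹ 1), inter_assoc, inter_eq_left.mpr hss]
    rw [h0, hb, Measure.restrict_apply hW]
  have hmW : μ W ≠ ∞ := by
    refine ne_of_lt (lt_of_le_of_lt (measure_mono (subset_univ W)) ?_)
    simp [Real.volume_Ioc]
  have hsplit : Ioc (0:ℝ) 2⁻¹ ∪ Ioc (2⁻¹:ℝ) 1 = Ioc 0 1 :=
    Ioc_union_Ioc_eq_Ioc (by norm_num) (by norm_num)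
  have hd : Disjoint (Ioc (0:ℝ) 2⁻¹ ∩ p2dT ⁻¹' W) (Ioc (2⁻¹:ℝ) 1 ∩ p2dT ⁻¹' W) :=
    (Set.Ioc_disjoint_Ioc_of_le le_rfl).mono inter_subset_left inter_subset_left
  have hsum : μ (Ioc (0:ℝ) 2⁻¹ ∩ p2dT ⁻¹' W) + μ (Ioc (2⁻¹:ℝ) 1 ∩ p2dT ⁻¹' W)
      = μ W := by
    rw [← measure_union hd (measurableSet_Ioc.inter (measurable_p2dT hW))]
    rw [← union_inter_distrib_right, hsplit]
    rw [Measure.restrict_apply (measurableSet_Ioc.inter (measurable_p2dT hW)),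
      Measure.restrict_apply hW,
      inter_comm (Ioc (0:ℝ) 1), inter_assoc, inter_self]
    have hp := p2dT_pres W hW
    rw [Measure.restrict_apply (measurable_p2dT hW), Measure.restrict_apply hW] at hp
    exact hp
  have hfin : (2:ℝ≥0∞)⁻¹ * μ W ≠ ∞ := ENNReal.mul_ne_top (by norm_num) hmW
  have hw : (2:ℝ≥0∞)⁻¹ * μ W + 2⁻¹ * μ W = μ W := by
    rw [show (2:ℝ≥0∞)⁻¹ * μ W = μ W / 2 by rw [div_eq_mul_inv, mul_comm]]
    exact ENNReal.add_halves _
  rw [hA] at hsum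
  nth_rewrite 2 [← hw] at hsum
  exact (ENNReal.add_left_inj hfin).mp hsum

noncomputable def p2dV : ℕ → Set ℝ
  | 0 => Ioc (0:ℝ) 2⁻¹
  | (j+1) => Ioc (0:ℝ) 2⁻¹ ∩ p2dT ⁻¹' (p2dV j)

lemma p2dV_meas (j : ℕ) : MeasurableSet (p2dV j) := by
  induction j with
  | zero => exact measurableSet_Ioc
  | succ m ih => exact measurableSet_Ioc.inter (measurable_p2dT ih)

lemma p2dV_vol (j : ℕ) : μ (p2dV j) = (2:ℝ≥0∞)⁻¹^(j+1) := by
  induction j with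
  | zero =>
    rw [show p2dV 0 = Ioc (0:ℝ) 2⁻¹ from rfl, Measure.restrict_apply measurableSet_Ioc,
      inter_eq_left.mpr (Ioc_subset_Ioc le_rfl (by norm_num)), Real.volume_Ioc]
    rw [show ((2:ℝ)⁻¹ - 0) = 2⁻¹ by norm_num, pow_one,
      ENNReal.ofReal_inv_of_pos (by norm_num)]
    norm_num
  | succ m ih =>
    rw [show p2dV (m+1) = Ioc (0:ℝ) 2⁻¹ ∩ p2dT ⁻¹' (p2dV m) from rfl,
      half_inter _ (p2dV_meas m), ih, ← pow_succ']

lemma p2dV_mem (j : ℕ) {x : ℝ} (h : ∀ i ≤ j, p2dT^[i] x ∈ Ioc (0:ℝ) 2⁻¹) :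
    x ∈ p2dV j := by
  induction j generalizing x with
  | zero => simpa [p2dV] using h 0 le_rfl
  | succ m ih =>
    refine ⟨by simpa using h 0 (Nat.zero_le _), ?_⟩
    refine ih fun i hi => ?_
    rw [← Function.iterate_succ_apply]
    exact h (i+1) (Nat.succ_le_succ hi)

lemma ae_freq : ∀ᵐ x ∂μ, ∃ᶠ k in atTop, p2dT^[k] x ∈ Ioc ((2:ℝ)⁻¹) 1 := by
  have hVmeas : MeasurableSet (⋂ j, p2dV j) := MeasurableSet.iInter fun j => p2dV_meas j
  have hV0 : μ (⋂ j, p2dV j) = 0 := by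
    refine le_antisymm ?_ zero_le
    have htend : Tendsto (fun j : ℕ => (2:ℝ≥0∞)⁻¹^(j+1)) atTop (nhds 0) :=
      (ENNReal.tendsto_pow_atTop_nhds_zero_of_lt_one (by norm_num)).comp
        (tendsto_add_atTop_nat 1)
    exact ge_of_tendsto' htend fun j =>
      (measure_mono (iInter_subset _ j)).trans_eq (p2dV_vol j)
  have hZ : μ (⋃ N : ℕ, (p2dT^[N]) ⁻¹' (⋂ j, p2dV j)) = 0 :=
    measure_iUnion_null fun N => by rw [p2dT_iter_pres N _ hVmeas]; exact hV0
  have h1 : ∀ᵐ x ∂μ, x ∈ Ioc (0:ℝ) 1 := ae_restrict_mem measurableSet_Ioc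
  have h2 : ∀ᵐ x ∂μ, x ∉ ⋃ N : ℕ, (p2dT^[N]) ⁻¹' (⋂ j, p2dV j) :=
    measure_eq_zero_iff_ae_notMem.mp hZ
  filter_upwards [h1, h2] with x hx hxZ
  by_contra hfreq
  rw [not_frequently] at hfreq
  obtain ⟨m, hm⟩ := eventually_atTop.mp hfreq
  apply hxZ
  refine mem_iUnion.mpr ⟨m, ?_⟩
  refine mem_iInter.mpr fun j => ?_
  refine p2dV_mem j fun i _ => ?_
  rw [← Function.iterate_add_apply]
  have hmem := p2dT_iter_mem hx (i + m)
  have hnot := hm (i + m) (Nat.le_add_left m i)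
  constructor
  · exact hmem.1
  · by_contra hgt
    push_neg at hgt
    exact hnot ⟨hgt, hmem.2⟩

lemma aux_tendsto_atBot :
    Tendsto (fun n : ℕ => (1 - Real.logb 2 n) / Real.logb 2 (Real.log n)) atTop atBot := by
  have hF : Tendsto (fun t : ℝ => Real.log 2 / Real.log t - t / Real.log t) atTop atBot := by
    have h0 : Tendsto (fun t : ℝ => Real.log 2 / Real.log t) atTop (nhds 0) :=
      Filter.Tendsto.div_atTop tendsto_const_nhds Real.tendsto_log_atTop
    have hdiv : Tendsto (fun t : ℝ => t / Real.log t) atTop atTop := by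
      have hlo : Tendsto (fun t : ℝ => Real.log t / t) atTop (nhds 0) :=
        Real.isLittleO_log_id_atTop.tendsto_div_nhds_zero
      have hpos : ∀ᶠ t : ℝ in atTop, Real.log t / t ∈ Set.Ioi (0:ℝ) := by
        filter_upwards [eventually_gt_atTop (3:ℝ)] with t ht
        have h1 : 0 < Real.log t := Real.log_pos (by linarith)
        exact div_pos h1 (by linarith)
      have : Tendsto (fun t : ℝ => Real.log t / t) atTop (nhdsWithin 0 (Set.Ioi 0)) :=
        tendsto_nhdsWithin_of_tendsto_nhds_of_eventually_within _ hlo hpos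
      have hinv := this.inv_tendsto_nhdsGT_zero
      refine hinv.congr' ?_
      filter_upwards [eventually_gt_atTop (0:ℝ)] with t _
      rw [Pi.inv_apply, inv_div]
    have hneg : Tendsto (fun t : ℝ => -(t / Real.log t)) atTop atBot :=
      tendsto_neg_atTop_atBot.comp hdiv
    have hle : ∀ᶠ t : ℝ in atTop, Real.log 2 / Real.log t ≤ 1 := by
      have := h0.eventually (eventually_le_nhds (by norm_num : (0:ℝ) < 1))
      exact this
    have := tendsto_atBot_add_left_of_ge' atTop (1:ℝ) hle hneg
    refine this.congr fun t => by ring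
  have hcomp : Tendsto (fun n : ℕ => Real.log (n:ℝ)) atTop atTop :=
    Real.tendsto_log_atTop.comp tendsto_natCast_atTop_atTop
  have := hF.comp hcomp
  refine this.congr' ?_
  filter_upwards [eventually_gt_atTop (1:ℕ)] with n hn
  have hn1 : (1:ℝ) < (n:ℝ) := by exact_mod_cast hn
  have hlogn : 0 < Real.log n := Real.log_pos hn1
  have hl2 : Real.log 2 ≠ 0 := by
    have := Real.log_pos (by norm_num : (1:ℝ) < 2); linarith
  show Real.log 2 / Real.log (Real.log n) - Real.log n / Real.log (Real.log n)
      = (1 - Real.logb 2 n) / Real.logb 2 (Real.log n)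
  rw [Real.logb, Real.logb]
  rcases eq_or_ne (Real.log (Real.log n)) 0 with h | h
  · simp [h]
  · field_simp

lemma p2dD1_pos {x : ℝ} (hx : x ∈ Ioc (0:ℝ) 1) : 1 ≤ p2dD1 x := by
  obtain ⟨n, h1, h2⟩ := mem_branch hx
  rw [p2dD1_eq n h1 h2]
  omega

lemma p2dD1_one {y : ℝ} (hy : y ∈ Ioc ((2:ℝ)⁻¹) 1) : p2dD1 y = 1 := by
  have := p2dD1_eq 0 (x := y) (by rw [show ((2:ℝ)^(0+1))⁻¹ = (2:ℝ)⁻¹ by norm_num]; exact hy.1) (by rw [show ((2:ℝ)^0)⁻¹ = (1:ℝ) by norm_num]; exact hy.2)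
  simpa using this

/-- a.e. liminf behaviour of digits. -/
theorem p2d_digit_liminf :
    ∀ᵐ x ∂(volume.restrict (Set.Ioc (0:ℝ) 1)),
      liminf (fun n : ℕ => p2dDigit n x) atTop = 1 ∧
      liminf (fun n : ℕ =>
        ((((p2dDigit n x : ℝ) - Real.logb 2 n) / Real.logb 2 (Real.log n) : ℝ) : EReal))
        atTop = ⊥ := by
  filter_upwards [ae_freq, ae_restrict_mem measurableSet_Ioc] with x hfreq hx
  have hone : ∀ n : ℕ, 1 ≤ p2dDigit n x := fun n =>
    p2dD1_pos (p2dT_iter_mem hx (n-1))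
  have hfreq1 : ∃ᶠ n in atTop, p2dDigit n x = 1 := by
    rw [frequently_atTop] at hfreq ⊢
    intro N
    obtain ⟨k, hk, hkA⟩ := hfreq N
    refine ⟨k + 1, le_trans hk (Nat.le_succ k), ?_⟩
    have : p2dDigit (k+1) x = p2dD1 (p2dT^[k] x) := by
      simp [p2dDigit]
    rw [this, p2dD1_one hkA]
  constructor
  · refine le_antisymm ?_ ?_
    · exact liminf_le_of_frequently_le (hfreq1.mono fun n hn => hn.le)
    · refine le_liminf_of_le (IsCoboundedUnder.of_frequently_le
        (hfreq1.mono fun n hn => hn.le)) (Eventually.of_forall hone)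
  · rw [EReal.eq_bot_iff_forall_lt]
    intro C
    have hev : ∀ᶠ n : ℕ in atTop,
        (1 - Real.logb 2 n) / Real.logb 2 (Real.log n) ≤ C - 1 :=
      tendsto_atBot.mp aux_tendsto_atBot (C - 1)
    have hfr : ∃ᶠ n in atTop,
        ((((p2dDigit n x : ℝ) - Real.logb 2 n) / Real.logb 2 (Real.log n) : ℝ) : EReal)
          ≤ ((C - 1 : ℝ) : EReal) := by
      refine (hfreq1.and_eventually hev).mono ?_
      rintro n ⟨h1, h2⟩
      rw [EReal.coe_le_coe_iff, h1]
      exact_mod_cast h2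
    refine lt_of_le_of_lt (liminf_le_of_frequently_le' hfr) ?_
    exact EReal.coe_lt_coe_iff.mpr (by linarith)
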